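/- Let c ∈ ℝ, δ > 0, ε ≥ 0, and let z : [0,∞) → ℂ be continuously differentiable and R : [0,∞) → ℂ continuous, with z'(t) = −(i c/(t+1))·|z(t)|²·z(t) + R(t) and |R(t)| ≤ ε·(1+t)^{−1−δ} for all t ≥ 0. Define W(t) := exp( i c ∫₀^t |z(s)|²/(s+1) ds ) · z(t). Then: (i) |W(t)| = |z(t)| for all t ≥ 0; (ii) |W'(t)| ≤ ε·(1+t)^{−1−δ} for all t ≥ 0; (iii) there exists W∞ ∈ ℂ such that |W(t) − W∞| ≤ (ε/δ)·(1+t)^{−δ} for all t ≥ 0; in particular | |z(t)| − |W∞| | ≤ (ε/δ)·(1+t)^{−δ} for all t ≥ 0. -/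

import Mathlib

open Filter

/-- The modified profile `W(t) = exp(i c ∫₀^t |z(s)|²/(s+1) ds) · z(t)`. -/
noncomputable def Wmod (c : ℝ) (z : ℝ → ℂ) (t : ℝ) : ℂ :=
  Complex.exp (Complex.I * (c : ℂ) *
    ((∫ s in (0 : ℝ)..t, ‖z s‖ ^ 2 / (s + 1)) : ℝ)) * z t

private lemma ofReal_hasDerivWithinAt {f : ℝ → ℝ} {u x : ℝ} {s : Set ℝ}
    (hf : HasDerivWithinAt f u s x) :
    HasDerivWithinAt (fun y => ((f y : ℝ) : ℂ)) (u : ℂ) s x := by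
  exact hf.ofReal_comp

/-- The modified-scattering ODE lemma: if `z' = −(ic/(t+1))|z|²z + R` on `[0,∞)`
with `|R(t)| ≤ ε(1+t)^{−1−δ}`, then the modified profile `W` has the same modulus
as `z`, satisfies `|W'(t)| ≤ ε(1+t)^{−1−δ}`, and converges to some `Winf` at the
rate `(ε/δ)(1+t)^{−δ}`; in particular `||z(t)| − |Winf|| ≤ (ε/δ)(1+t)^{−δ}`. -/
theorem modified_scattering_ode
    (c δ ε : ℝ) (hδ : 0 < δ) (hε : 0 ≤ ε)
    (z R : ℝ → ℂ) (hR : ContinuousOn R (Set.Ici 0))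
    (hz : ∀ t ∈ Set.Ici (0 : ℝ),
      HasDerivWithinAt z
        (-(Complex.I * (c : ℂ) / ((t : ℂ) + 1)) * ((‖z t‖ ^ 2 : ℝ) : ℂ) * z t + R t)
        (Set.Ici 0) t)
    (hRbound : ∀ t ∈ Set.Ici (0 : ℝ), ‖R t‖ ≤ ε * (1 + t) ^ (-(1 + δ))) :
    (∀ t ∈ Set.Ici (0 : ℝ), ‖Wmod c z t‖ = ‖z t‖) ∧
    (∀ t ∈ Set.Ici (0 : ℝ),
      ‖derivWithin (Wmod c z) (Set.Ici 0) t‖ ≤ ε * (1 + t) ^ (-(1 + δ))) ∧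
    ∃ Winf : ℂ, ∀ t ∈ Set.Ici (0 : ℝ),
      ‖Wmod c z t - Winf‖ ≤ ε / δ * (1 + t) ^ (-δ) ∧
      |‖z t‖ - ‖Winf‖| ≤ ε / δ * (1 + t) ^ (-δ) := by
  set f : ℝ → ℝ := fun s => ‖z s‖ ^ 2 / (s + 1) with hf_def
  set θ : ℝ → ℝ := fun t => ∫ s in (0 : ℝ)..t, f s with hθ_def
  have hz_cont : ContinuousOn z (Set.Ici 0) := fun t ht => (hz t ht).continuousWithinAt
  have hf_cont : ContinuousOn f (Set.Ici 0) := by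
    apply ContinuousOn.div
    · exact (hz_cont.norm.pow 2)
    · exact (continuous_id.add continuous_const).continuousOn
    · intro s hs
      have : (0:ℝ) < s + 1 := by simp at hs; linarith
      exact ne_of_gt this
  have hint : ∀ a b : ℝ, 0 ≤ a → 0 ≤ b →
      IntervalIntegrable f MeasureTheory.volume a b := by
    intro a b ha hb
    apply ContinuousOn.intervalIntegrable
    apply hf_cont.mono
    intro x hx
    rcases Set.mem_uIcc.mp hx with h | h
    · exact le_trans ha h.1
    · exact le_trans hb h.1
  -- derivative of θ within Ici 0
  have hθd : ∀ t ∈ Set.Ici (0:ℝ), HasDerivWithinAt θ (f t) (Set.Ici 0) t := by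
    intro t ht
    rcases eq_or_lt_of_le (Set.mem_Ici.mp ht) with h0 | h0
    · subst h0
      exact intervalIntegral.integral_hasDerivWithinAt_right (hint 0 0 le_rfl le_rfl)
        ⟨Set.Ici 0, Filter.mem_of_superset self_mem_nhdsWithin Set.Ioi_subset_Ici_self,
          hf_cont.aestronglyMeasurable measurableSet_Ici⟩
        ((hf_cont 0 Set.self_mem_Ici).mono Set.Ioi_subset_Ici_self)
    · have hmem : Set.Ici (0:ℝ) ∈ nhds t := Ici_mem_nhds h0
      have hca : ContinuousAt f t := hf_cont.continuousAt hmem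
      have := intervalIntegral.integral_hasDerivAt_right (hint 0 t le_rfl (le_of_lt h0))
        ⟨Set.Ici 0, hmem, hf_cont.aestronglyMeasurable measurableSet_Ici⟩ hca
      exact this.hasDerivWithinAt
  -- derivative of W within Ici 0
  have hWd : ∀ t ∈ Set.Ici (0:ℝ), HasDerivWithinAt (Wmod c z)
      (Complex.exp (Complex.I * (c : ℂ) * ((θ t : ℝ) : ℂ)) * R t) (Set.Ici 0) t := by
    intro t ht
    have h1 : HasDerivWithinAt (fun t => ((θ t : ℝ) : ℂ)) ((f t : ℝ) : ℂ) (Set.Ici 0) t :=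
      ofReal_hasDerivWithinAt (hθd t ht)
    have h2 : HasDerivWithinAt (fun t => Complex.I * (c : ℂ) * ((θ t : ℝ) : ℂ))
        (Complex.I * (c : ℂ) * ((f t : ℝ) : ℂ)) (Set.Ici 0) t := h1.const_mul _
    have h3 := h2.cexp
    have h4 := h3.mul (hz t ht)
    have hne : ((t : ℂ) + 1) ≠ 0 := by
      have : ((t : ℂ) + 1) = ((t + 1 : ℝ) : ℂ) := by push_cast; ring
      rw [this]
      exact_mod_cast ne_of_gt (by simp at ht; linarith : (0:ℝ) < t + 1)
    have heq : Complex.exp (Complex.I * (c:ℂ) * ((θ t : ℝ):ℂ)) *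
          (Complex.I * (c:ℂ) * ((f t : ℝ):ℂ)) * z t +
        Complex.exp (Complex.I * (c:ℂ) * ((θ t : ℝ):ℂ)) *
          (-(Complex.I * (c : ℂ) / ((t : ℂ) + 1)) * ((‖z t‖ ^ 2 : ℝ) : ℂ) * z t + R t) =
        Complex.exp (Complex.I * (c : ℂ) * ((θ t : ℝ) : ℂ)) * R t := by
      have hfc : ((f t : ℝ) : ℂ) = ((‖z t‖ ^ 2 : ℝ) : ℂ) / ((t : ℂ) + 1) := by
        simp only [hf_def]; push_cast; ring
      rw [hfc]
      field_simp
      ring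
    have : Wmod c z = fun t => Complex.exp (Complex.I * (c:ℂ) * ((θ t : ℝ):ℂ)) * z t := by
      funext u; rfl
    rw [this]
    exact heq ▸ h4
  have habs_exp : ∀ t : ℝ, ‖Complex.exp (Complex.I * (c:ℂ) * ((θ t : ℝ):ℂ))‖ = 1 := by
    intro t
    rw [Complex.norm_exp]
    simp [Complex.mul_re]
  -- part (i)
  have part1 : ∀ t ∈ Set.Ici (0:ℝ), ‖Wmod c z t‖ = ‖z t‖ := by
    intro t _
    unfold Wmod
    rw [norm_mul]
    have := habs_exp t
    simp only [hθ_def, hf_def] at this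
    rw [this, one_mul]
  -- part (ii)
  have part2 : ∀ t ∈ Set.Ici (0:ℝ),
      ‖derivWithin (Wmod c z) (Set.Ici 0) t‖ ≤ ε * (1 + t) ^ (-(1 + δ)) := by
    intro t ht
    rw [(hWd t ht).derivWithin (uniqueDiffOn_Ici 0 t ht)]
    rw [norm_mul]
    have h1 : ‖Complex.exp (Complex.I * (c:ℂ) * ((θ t : ℝ):ℂ))‖ = 1 := habs_exp t
    rw [h1, one_mul]
    exact hRbound t ht
  refine ⟨part1, part2, ?_⟩
  -- the key Cauchy estimate
  have key : ∀ a b : ℝ, 0 ≤ a → a ≤ b →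
      ‖Wmod c z b - Wmod c z a‖ ≤ ε / δ * (1 + a) ^ (-δ) := by
    intro a b ha hab
    have hb : (0:ℝ) ≤ b := le_trans ha hab
    have hsub : Set.Icc a b ⊆ Set.Ici (0:ℝ) := fun x hx => le_trans ha hx.1
    have hWcont : ContinuousOn (Wmod c z) (Set.Icc a b) :=
      fun x hx => ((hWd x (hsub hx)).continuousWithinAt).mono hsub
    set g : ℝ → ℂ := fun s => Complex.exp (Complex.I * (c:ℂ) * ((θ s : ℝ):ℂ)) * R s with hg_def
    have hθcont : ContinuousOn θ (Set.Ici 0) := fun x hx => (hθd x hx).continuousWithinAt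
    have hgcont : ContinuousOn g (Set.Ici 0) := by
      exact ((Complex.continuous_exp.comp
        (continuous_const.mul Complex.continuous_ofReal)).comp_continuousOn hθcont).mul hR
    have hgint : IntervalIntegrable g MeasureTheory.volume a b :=
      (hgcont.mono hsub).intervalIntegrable_of_Icc hab
    have hftc : ∫ s in a..b, g s = Wmod c z b - Wmod c z a := by
      apply intervalIntegral.integral_eq_sub_of_hasDeriv_right_of_le hab hWcont _ hgint
      intro t htm
      exact (hWd t (hsub (Set.mem_Icc_of_Ioo htm))).mono
        (fun x hx => Set.mem_Ici.mpr (le_trans (hsub ⟨le_of_lt htm.1, le_of_lt htm.2⟩) (le_of_lt hx)))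
    -- bound function
    set B : ℝ → ℝ := fun s => ε * (1 + s) ^ (-(1 + δ)) with hB_def
    have hBcont : ContinuousOn B (Set.Icc a b) := by
      apply ContinuousOn.mul continuousOn_const
      apply ContinuousOn.rpow_const
      · exact (continuous_const.add continuous_id).continuousOn
      · intro x hx
        left
        have : (0:ℝ) < 1 + x := by have := hsub hx; simp at this; linarith
        exact ne_of_gt this
    have hBint : IntervalIntegrable B MeasureTheory.volume a b :=
      hBcont.intervalIntegrable_of_Icc hab
    have hnormle : ‖∫ s in a..b, g s‖ ≤ ∫ s in a..b, B s := by
      refine le_trans (intervalIntegral.norm_integral_le_integral_norm hab) ?_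
      apply intervalIntegral.integral_mono_on hab hgint.norm hBint
      intro s hs
      have hs0 : s ∈ Set.Ici (0:ℝ) := hsub hs
      simp only [hg_def, norm_mul]
      have h1 : ‖Complex.exp (Complex.I * (c:ℂ) * ((θ s : ℝ):ℂ))‖ = 1 := habs_exp s
      rw [h1, one_mul]
      exact hRbound s hs0
    -- compute ∫ B
    have hBval : ∫ s in a..b, B s =
        (-(ε/δ) * (1 + b) ^ (-δ)) - (-(ε/δ) * (1 + a) ^ (-δ)) := by
      apply intervalIntegral.integral_eq_sub_of_hasDerivAt _ hBint
      intro s hs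
      have hs0 : (0:ℝ) < 1 + s := by
        rcases Set.mem_uIcc.mp hs with h | h
        · have : (0:ℝ) ≤ s := le_trans ha h.1
          linarith
        · have : (0:ℝ) ≤ s := le_trans hb h.1
          linarith
      have h1 : HasDerivAt (fun s : ℝ => 1 + s) 1 s := by
        simpa using (hasDerivAt_id s).const_add 1
      have h2 : HasDerivAt (fun s : ℝ => (1 + s) ^ (-δ))
          (-δ * (1 + s) ^ (-δ - 1) * 1) s :=
        (Real.hasDerivAt_rpow_const (Or.inl (ne_of_gt hs0))).comp s h1
      have h3 := h2.const_mul (-(ε/δ))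
      refine h3.congr_deriv (Eq.symm ?_)
      rw [hB_def]
      simp only
      field_simp
      rw [show -δ - 1 = -(1+δ) by ring]
    have hfin : (-(ε/δ) * (1 + b) ^ (-δ)) - (-(ε/δ) * (1 + a) ^ (-δ)) ≤
        ε / δ * (1 + a) ^ (-δ) := by
      have h1 : (0:ℝ) ≤ ε / δ := div_nonneg hε (le_of_lt hδ)
      have h2 : (0:ℝ) ≤ (1 + b) ^ (-δ) := Real.rpow_nonneg (by linarith) _
      nlinarith
    calc ‖Wmod c z b - Wmod c z a‖ = ‖∫ s in a..b, g s‖ := by rw [hftc]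
      _ ≤ ∫ s in a..b, B s := hnormle
      _ ≤ ε / δ * (1 + a) ^ (-δ) := by rw [hBval]; exact hfin
  -- Cauchy sequence
  have hmono : ∀ x y : ℝ, 0 ≤ x → x ≤ y → (1 + y) ^ (-δ) ≤ (1 + x) ^ (-δ) := by
    intro x y hx hxy
    exact Real.rpow_le_rpow_of_nonpos (by linarith) (by linarith) (by linarith)
  have hCauchy : CauchySeq (fun n : ℕ => Wmod c z n) := by
    apply cauchySeq_of_le_tendsto_0 (fun N : ℕ => ε / δ * (1 + (N:ℝ)) ^ (-δ))
    · intro n m N hn hm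
      have h1 : (0:ℝ) ≤ ε / δ := div_nonneg hε (le_of_lt hδ)
      rcases le_total n m with h | h
      · rw [dist_eq_norm, ← norm_neg, neg_sub]
        calc ‖Wmod c z m - Wmod c z n‖ ≤ ε / δ * (1 + (n:ℝ)) ^ (-δ) :=
              key n m (Nat.cast_nonneg n) (by exact_mod_cast h)
          _ ≤ ε / δ * (1 + (N:ℝ)) ^ (-δ) := by
              apply mul_le_mul_of_nonneg_left _ h1
              exact hmono N n (Nat.cast_nonneg N) (by exact_mod_cast hn)
      · rw [dist_eq_norm]
        calc ‖Wmod c z n - Wmod c z m‖ ≤ ε / δ * (1 + (m:ℝ)) ^ (-δ) :=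
              key m n (Nat.cast_nonneg m) (by exact_mod_cast h)
          _ ≤ ε / δ * (1 + (N:ℝ)) ^ (-δ) := by
              apply mul_le_mul_of_nonneg_left _ h1
              exact hmono N m (Nat.cast_nonneg N) (by exact_mod_cast hm)
    · have h0 : Tendsto (fun N : ℕ => (1 + (N:ℝ))) atTop atTop :=
        tendsto_atTop_add_const_left _ 1 tendsto_natCast_atTop_atTop
      have := (tendsto_rpow_neg_atTop hδ).comp h0
      have h2 := this.const_mul (ε / δ)
      simpa using h2
  obtain ⟨Winf, hWinf⟩ := cauchySeq_tendsto_of_complete hCauchy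
  refine ⟨Winf, fun t ht => ?_⟩
  have hbound : ‖Wmod c z t - Winf‖ ≤ ε / δ * (1 + t) ^ (-δ) := by
    have htend : Tendsto (fun n : ℕ => ‖Wmod c z t - Wmod c z n‖) atTop
        (nhds ‖Wmod c z t - Winf‖) := (tendsto_const_nhds.sub hWinf).norm
    apply le_of_tendsto htend
    filter_upwards [eventually_ge_atTop ⌈t⌉₊] with n hn
    have htn : t ≤ (n:ℝ) := le_trans (Nat.le_ceil t) (by exact_mod_cast hn)
    rw [← norm_neg, neg_sub]
    exact key t n ht htn
  refine ⟨hbound, ?_⟩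
  have h1 : ‖z t‖ = ‖Wmod c z t‖ := (part1 t ht).symm
  rw [h1]
  exact le_trans (abs_norm_sub_norm_le _ _) hbound
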